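/- For any Lie element f ∈ Lie(X) ⊆ k⟨X⟩ (a nonzero element of the Lie subalgebra generated by X under the commutator bracket), the leading word of f with respect to the deg-lex order on X* is an associative Lyndon-Shirshov word. -/

import Mathlib

open List

/-- The lexicographic order used by Shirshov: a word is *greater* than any of its
proper extensions (`w > w ++ t` for `t ≠ []`), and otherwise words are compared
letterwise by the order on the alphabet.  `LSLt u v` means `u < v`. -/
def LSLt {X : Type*} [LinearOrder X] : List X → List X → Prop
  | _ :: _, [] => True
  | [], _ => False
  | a :: u, b :: v => a < b ∨ (a = b ∧ LSLt u v)

/-- `u ≤ v` in the Shirshov lexicographic order. -/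
def LSLe {X : Type*} [LinearOrder X] (u v : List X) : Prop := u = v ∨ LSLt u v

/-- The degree-lexicographic order: compare first by length, then lexicographically. -/
def DegLt {X : Type*} [LinearOrder X] (u v : List X) : Prop :=
  u.length < v.length ∨ (u.length = v.length ∧ LSLt u v)

/-- `≤` in the degree-lexicographic order. -/
def DegLe {X : Type*} [LinearOrder X] (u v : List X) : Prop := u = v ∨ DegLt u v

/-- An associative Lyndon–Shirshov word: a nonempty word `u` such that `vw > wv`
(lexicographically) for every factorization `u = vw` into nonempty parts. -/
def IsALSW {X : Type*} [LinearOrder X] (u : List X) : Prop :=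
  u ≠ [] ∧ ∀ v w : List X, v ≠ [] → w ≠ [] → u = v ++ w → LSLt (w ++ v) (v ++ w)

/-- The underlying associative word of a non-associative word (binary bracketing). -/
def wordOf {X : Type*} : FreeMagma X → List X
  | .of x => [x]
  | .mul a b => wordOf a ++ wordOf b

/-- `w` is the longest proper suffix of `u` which is an ALSW. -/
def LongestALSWProperSuffix {X : Type*} [LinearOrder X] (u w : List X) : Prop :=
  IsALSW w ∧ (∃ v : List X, v ≠ [] ∧ u = v ++ w) ∧
    ∀ w' : List X, IsALSW w' → (∃ v' : List X, v' ≠ [] ∧ u = v' ++ w') →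
      w'.length ≤ w.length

/-- The standard (up-to-down) bracketing of an ALSW: `[x] = x` and
`[u] = [[v][w]]` where `w` is the longest proper ALSW suffix of `u`. -/
inductive IsStdBracketing {X : Type*} [LinearOrder X] : List X → FreeMagma X → Prop
  | of (x : X) : IsStdBracketing [x] (.of x)
  | mul {v w : List X} {tv tw : FreeMagma X} :
      IsALSW (v ++ w) → LongestALSWProperSuffix (v ++ w) w →
      IsStdBracketing v tv → IsStdBracketing w tw →
      IsStdBracketing (v ++ w) (tv * tw)

/-- A non-associative Lyndon–Shirshov word, via Shirshov's conditions:
the underlying word is an ALSW, both halves are NLSWs, and the right factor of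
the left half is `≤` the right half. -/
inductive IsNLSW {X : Type*} [LinearOrder X] : FreeMagma X → Prop
  | of (x : X) : IsNLSW (.of x)
  | mul {tv tw : FreeMagma X} :
      IsNLSW tv → IsNLSW tw → IsALSW (wordOf (tv * tw)) →
      (∀ t₁ t₂ : FreeMagma X, tv = t₁ * t₂ → LSLe (wordOf t₂) (wordOf tw)) →
      IsNLSW (tv * tw)

/-- The free associative algebra `k⟨X⟩`, realized as the monoid algebra of the
free monoid on `X`. -/
abbrev FreeAssocAlg (k X : Type*) [Field k] := MonoidAlgebra k (FreeMonoid X)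

/-- The monomial of `k⟨X⟩` corresponding to a word `u ∈ X*`. -/
noncomputable def monom (k : Type*) [Field k] {X : Type*} (u : List X) : FreeAssocAlg k X :=
  MonoidAlgebra.single (FreeMonoid.ofList u) 1

/-- The coefficient of the word `u` in `f ∈ k⟨X⟩`. -/
def coeffW {k X : Type*} [Field k] (f : FreeAssocAlg k X) (u : List X) : k :=
  f.coeff (FreeMonoid.ofList u)

/-- `u` is the leading word of `f` with respect to the deg-lex order. -/
def IsLeadingWord {k X : Type*} [Field k] [LinearOrder X]
    (f : FreeAssocAlg k X) (u : List X) : Prop :=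
  coeffW f u ≠ 0 ∧ ∀ w : List X, coeffW f w ≠ 0 → w = u ∨ DegLt w u

/-- `f` is monic: its leading coefficient is `1`. -/
def IsMonic {k X : Type*} [Field k] [LinearOrder X] (f : FreeAssocAlg k X) : Prop :=
  ∃ u : List X, IsLeadingWord f u ∧ coeffW f u = 1

/-- The generator `x ∈ X` inside `k⟨X⟩`. -/
noncomputable def gen (k : Type*) [Field k] {X : Type*} (x : X) : FreeAssocAlg k X :=
  monom k [x]

attribute [local instance] LieRing.ofAssociativeRing

/-- The free Lie algebra `Lie(X)`: the Lie subalgebra of `k⟨X⟩` generated by `X`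
under the commutator bracket. -/
noncomputable def LieX (k X : Type*) [Field k] : LieSubalgebra k (FreeAssocAlg k X) :=
  LieSubalgebra.lieSpan k _ (Set.range (gen k (X := X)))

/-- Evaluation of a non-associative word in `k⟨X⟩`, interpreting the binary
operation as the commutator `(ab) = ab - ba`. -/
noncomputable def evalC {k X : Type*} [Field k] : FreeMagma X → FreeAssocAlg k X
  | .of x => gen k x
  | .mul a b => evalC a * evalC b - evalC b * evalC a

section OrderLemmas

variable {X : Type*} [LinearOrder X]

theorem lslt_irrefl (u : List X) : ¬ LSLt u u := by
  induction u with
  | nil => simp [LSLt]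
  | cons a u ih =>
    intro h
    rcases h with h | ⟨_, h⟩
    · exact lt_irrefl _ h
    · exact ih h

theorem lslt_trans {u v w : List X} (h1 : LSLt u v) (h2 : LSLt v w) : LSLt u w := by
  induction u generalizing v w with
  | nil => cases v <;> simp_all [LSLt]
  | cons a u ih =>
    cases v with
    | nil => simp [LSLt] at h2
    | cons b v =>
      cases w with
      | nil => trivial
      | cons c w =>
        rcases h1 with h1 | ⟨rfl, h1⟩
        · rcases h2 with h2 | ⟨rfl, h2⟩
          · exact Or.inl (h1.trans h2)
          · exact Or.inl h1
        · rcases h2 with h2 | ⟨rfl, h2⟩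
          · exact Or.inl h2
          · exact Or.inr ⟨rfl, ih h1 h2⟩

theorem lslt_asymm {u v : List X} (h1 : LSLt u v) (h2 : LSLt v u) : False :=
  lslt_irrefl u (lslt_trans h1 h2)

theorem lslt_trichotomy (u v : List X) : u = v ∨ LSLt u v ∨ LSLt v u := by
  induction u generalizing v with
  | nil =>
    cases v with
    | nil => exact Or.inl rfl
    | cons b v => exact Or.inr (Or.inr trivial)
  | cons a u ih =>
    cases v with
    | nil => exact Or.inr (Or.inl trivial)
    | cons b v =>
      rcases lt_trichotomy a b with h | rfl | h
      · exact Or.inr (Or.inl (Or.inl h))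
      · rcases ih v with rfl | h | h
        · exact Or.inl rfl
        · exact Or.inr (Or.inl (Or.inr ⟨rfl, h⟩))
        · exact Or.inr (Or.inr (Or.inr ⟨rfl, h⟩))
      · exact Or.inr (Or.inr (Or.inl h))

/-- a word is greater than any of its proper extensions -/
theorem lslt_append_right (s : List X) {t : List X} (ht : t ≠ []) : LSLt (s ++ t) s := by
  induction s with
  | nil => cases t with | nil => exact absurd rfl ht | cons a t => trivial
  | cons a s ih => exact Or.inr ⟨rfl, ih⟩

theorem lslt_append_left_iff {c s t : List X} : LSLt (c ++ s) (c ++ t) ↔ LSLt s t := by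
  induction c with
  | nil => rfl
  | cons a c ih => simp [LSLt, ih]

/-- master case lemma: if `A < B` then either `A` is a proper extension of `B`, or
the comparison is decided positionally (so any continuations compare the same way). -/
theorem lslt_cases {A B : List X} (h : LSLt A B) :
    (∃ t, t ≠ [] ∧ A = B ++ t) ∨ (∀ x y, LSLt (A ++ x) (B ++ y)) := by
  induction A generalizing B with
  | nil => cases B <;> simp_all [LSLt]
  | cons a A ih =>
    cases B with
    | nil => exact Or.inl ⟨a :: A, by simp, rfl⟩
    | cons b B =>
      rcases h with h | ⟨rfl, h⟩
      · exact Or.inr fun x y => Or.inl h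
      · rcases ih h with ⟨t, ht, rfl⟩ | hp
        · exact Or.inl ⟨t, ht, rfl⟩
        · exact Or.inr fun x y => Or.inr ⟨rfl, hp x y⟩

theorem lslt_append_of_length_le {A B : List X} (h : LSLt A B) (hl : A.length ≤ B.length)
    (x y : List X) : LSLt (A ++ x) (B ++ y) := by
  rcases lslt_cases h with ⟨t, ht, rfl⟩ | hp
  · exfalso
    have := List.length_append (as := B) (bs := t)
    have : t = [] := by
      have : t.length = 0 := by omega
      exact List.eq_nil_of_length_eq_zero this
    exact ht this
  · exact hp x y

theorem lslt_append_self {A B : List X} (h : LSLt A B) (x : List X) : LSLt (A ++ x) B := by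
  rcases lslt_cases h with ⟨t, ht, rfl⟩ | hp
  · have : B ++ t ++ x = B ++ (t ++ x) := by simp
    rw [this]
    exact lslt_append_right B (by simp [ht])
  · have := hp x []
    simpa using this

theorem lsle_refl (u : List X) : LSLe u u := Or.inl rfl

theorem lslt_lsle_trans {u v w : List X} (h1 : LSLt u v) (h2 : LSLe v w) : LSLt u w := by
  rcases h2 with rfl | h2
  · exact h1
  · exact lslt_trans h1 h2

theorem lsle_lslt_trans {u v w : List X} (h1 : LSLe u v) (h2 : LSLt v w) : LSLt u w := by
  rcases h1 with rfl | h1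
  · exact h2
  · exact lslt_trans h1 h2

theorem lsle_trans {u v w : List X} (h1 : LSLe u v) (h2 : LSLe v w) : LSLe u w := by
  rcases h1 with rfl | h1
  · exact h2
  · exact Or.inr (lslt_lsle_trans h1 h2)

end OrderLemmas

section ALSWLemmas

variable {X : Type*} [LinearOrder X]

/-- splitting a common word along two decompositions -/
theorem append_eq_append_of_le {a b c d : List X} (h : a ++ b = c ++ d)
    (hl : d.length ≤ b.length) : ∃ e, b = e ++ d ∧ a ++ e = c := by
  refine ⟨b.take (b.length - d.length), ?_, ?_⟩
  · have hsplit : b = b.take (b.length - d.length) ++ b.drop (b.length - d.length) :=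
      (List.take_append_drop _ b).symm
    have h' : (a ++ b.take (b.length - d.length)) ++ b.drop (b.length - d.length) = c ++ d := by
      rw [List.append_assoc, ← hsplit]; exact h
    have hdl : (b.drop (b.length - d.length)).length = d.length := by
      simp; omega
    have := (List.append_inj h' (by
      have hc := congrArg List.length h'
      simp at hc ⊢
      omega)).2
    conv_lhs => rw [hsplit]
    rw [this]
  · have hsplit : b = b.take (b.length - d.length) ++ b.drop (b.length - d.length) :=
      (List.take_append_drop _ b).symm
    have h' : (a ++ b.take (b.length - d.length)) ++ b.drop (b.length - d.length) = c ++ d := by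
      rw [List.append_assoc, ← hsplit]; exact h
    exact (List.append_inj h' (by
      have hc := congrArg List.length h'
      simp at hc ⊢
      omega)).1

theorem isALSW_singleton (x : X) : IsALSW [x] := by
  refine ⟨by simp, fun v w hv hw hvw => ?_⟩
  exfalso
  have := congrArg List.length hvw
  simp [List.length_append] at this
  cases v <;> cases w <;> simp_all

/-- a proper nonempty suffix of an ALSW is smaller than the word -/
theorem alsw_suffix_lt {p s : List X} (h : IsALSW (p ++ s)) (hp : p ≠ []) (hs : s ≠ []) :
    LSLt s (p ++ s) := by
  have hrot : LSLt (s ++ p) (p ++ s) := h.2 p s hp hs rfl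
  rcases lslt_trichotomy s (p ++ s) with heq | hlt | hgt
  · exfalso
    have hlen := congrArg List.length heq
    simp at hlen
    exact hp hlen
  · exact hlt
  · exfalso
    rcases lslt_cases hgt with ⟨t, ht, hext⟩ | hpos
    · -- border case: p ++ s = s ++ t
      have hlen : p.length = t.length := by
        have := congrArg List.length hext; simp at this; omega
      have hpt : LSLt p t := by
        have : LSLt (s ++ p) (s ++ t) := by rw [← hext]; exact hrot
        exact lslt_append_left_iff.mp this
      have hts : LSLt (t ++ s) (s ++ t) := h.2 s t hs ht hext
      have h1 : LSLt (p ++ s) (t ++ s) :=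
        lslt_append_of_length_le hpt (le_of_eq hlen) s s
      have h2 : LSLt (p ++ s) (p ++ s) := by
        rw [hext]
        exact lslt_trans (hext ▸ h1) hts
      exact lslt_irrefl _ h2
    · have h1 : LSLt ((p ++ s) ++ []) (s ++ p) := hpos [] p
      simp at h1
      exact lslt_asymm h1 hrot

/-- converse characterization -/
theorem isALSW_of_suffix_lt {u : List X} (hu : u ≠ [])
    (h : ∀ p s, u = p ++ s → p ≠ [] → s ≠ [] → LSLt s u) : IsALSW u := by
  refine ⟨hu, fun v w hv hw hvw => ?_⟩
  have hlt : LSLt w u := h v w hvw hv hw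
  rcases lslt_cases hlt with ⟨t, ht, hext⟩ | hpos
  · exfalso
    have hlen := congrArg List.length hext
    rw [hvw] at hlen
    simp at hlen
    have : t.length = 0 := by omega
    exact absurd (List.eq_nil_of_length_eq_zero (by
      have hv' : 0 < v.length := List.length_pos_iff.mpr hv
      omega)) ht
  · have := hpos v []
    rw [List.append_nil] at this
    rw [← hvw]
    exact this

theorem exists_bad_suffix_of_not_alsw {u : List X} (hu : u ≠ []) (h : ¬ IsALSW u) :
    ∃ p s, u = p ++ s ∧ p ≠ [] ∧ s ≠ [] ∧ LSLt u s := by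
  by_contra hc
  push_neg at hc
  apply h
  apply isALSW_of_suffix_lt hu
  intro p s hps hp hs
  rcases lslt_trichotomy s u with heq | hlt | hgt
  · exfalso
    subst heq
    have hlen := congrArg List.length hps
    simp at hlen
    exact hp hlen
  · exact hlt
  · exact absurd hgt (hc p s hps hp hs)

/-- concatenation of ALSWs, larger first, is an ALSW -/
theorem alsw_append {a b : List X} (ha : IsALSW a) (hb : IsALSW b) (hba : LSLt b a) :
    IsALSW (a ++ b) := by
  have hblt : LSLt b (a ++ b) := by
    rcases lslt_cases hba with ⟨t, ht, hext⟩ | hpos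
    · rw [hext]
      apply lslt_append_left_iff.mpr
      exact hext ▸ alsw_suffix_lt (hext ▸ hb) ha.1 ht
    · have := hpos [] b
      simpa using this
  apply isALSW_of_suffix_lt (by simp [ha.1])
  intro p s hps hp hs
  rcases le_or_gt s.length b.length with hsl | hsl
  · -- s is a suffix of b
    obtain ⟨q, hbq, _⟩ := append_eq_append_of_le hps hsl
    rcases eq_or_ne q [] with rfl | hq
    · simp at hbq
      subst hbq
      exact hblt
    · have hsb : LSLt s b := by
        rw [hbq]
        exact alsw_suffix_lt (hbq ▸ hb) hq hs
      exact lslt_trans hsb hblt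
  · -- s = r ++ b with r a proper nonempty suffix of a
    obtain ⟨r, hsr, hpr⟩ := append_eq_append_of_le hps.symm (le_of_lt hsl)
    have hr : r ≠ [] := by
      intro h'; subst h'; simp at hsr; subst hsr; omega
    have hrlt : LSLt r a := by
      rw [← hpr]
      exact alsw_suffix_lt (hpr ▸ ha) hp hr
    have hrlen : r.length < a.length := by
      have h1 := congrArg List.length hpr
      have hpl : 0 < p.length := List.length_pos_iff.mpr hp
      simp at h1; omega
    rw [hsr]
    exact lslt_append_of_length_le hrlt (le_of_lt hrlen) b b

end ALSWLemmas

section LongestSuffix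

variable {X : Type*} [LinearOrder X]

/-- every proper nonempty suffix of `u` is `≤` the longest ALSW proper suffix -/
theorem suffix_le_longest {u u2 : List X} (h : LongestALSWProperSuffix u u2) :
    ∀ r p, u = p ++ r → p ≠ [] → r ≠ [] → LSLe r u2 := by
  obtain ⟨h2alsw, ⟨u1, hu1, hu⟩, hmax⟩ := h
  suffices H : ∀ n r p, r.length = n → u = p ++ r → p ≠ [] → r ≠ [] → LSLe r u2 by
    intro r p h1 h2 h3; exact H r.length r p rfl h1 h2 h3
  intro n
  induction n using Nat.strong_induction_on with
  | _ n ih =>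
    intro r p hlen hup hp hr
    rcases le_or_gt r.length u2.length with hle | hgt
    · -- r is a suffix of u2
      obtain ⟨e, he, _⟩ := append_eq_append_of_le (hu.symm.trans hup : u1 ++ u2 = p ++ r) hle
      rcases eq_or_ne e [] with rfl | hene
      · simp at he; exact Or.inl he.symm
      · exact Or.inr (by rw [he]; exact alsw_suffix_lt (he ▸ h2alsw) hene hr)
    · -- r is longer than u2, hence not an ALSW
      have hnot : ¬ IsALSW r := fun halsw => by
        have := hmax r halsw ⟨p, hp, hup⟩
        omega
      obtain ⟨α, β, hr2, hα, hβ, hlt⟩ := exists_bad_suffix_of_not_alsw hr hnot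
      have hβlen : β.length < n := by
        have := congrArg List.length hr2
        have : 0 < α.length := List.length_pos_iff.mpr hα
        simp [hr2] at hlen ⊢
        omega
      have hβle : LSLe β u2 :=
        ih β.length hβlen β (p ++ α) rfl
          (by rw [hup, hr2, List.append_assoc]) (by simp [hp]) hβ
      exact Or.inr (lslt_lsle_trans hlt hβle)

/-- every word of length ≥ 2 has a longest ALSW proper suffix -/
theorem longest_exists (u : List X) (hu : 2 ≤ u.length) :
    ∃ w, LongestALSWProperSuffix u w := by
  classical
  set n := u.length with hn
  let P : ℕ → Prop := fun k => 0 < k ∧ k < n ∧ IsALSW (u.drop (n - k))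
  have h1 : P 1 := by
    refine ⟨one_pos, by omega, ?_⟩
    have hlen1 : (u.drop (n - 1)).length = 1 := by simp [hn]; omega
    obtain ⟨x, hx⟩ := List.length_eq_one_iff.mp hlen1
    rw [hx]; exact isALSW_singleton x
  let S : Finset ℕ := (Finset.range n).filter P
  have hS1 : 1 ∈ S := by
    simp only [S, Finset.mem_filter, Finset.mem_range]
    exact ⟨by omega, h1⟩
  obtain ⟨k, hkS, hkmax⟩ := S.exists_max_image id ⟨1, hS1⟩
  simp only [S, Finset.mem_filter, Finset.mem_range] at hkS
  have hkn := hkS.1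
  have hk0 := hkS.2.1
  have hkn' := hkS.2.2.1
  have hkalsw := hkS.2.2.2
  refine ⟨u.drop (n - k), hkalsw, ⟨u.take (n - k), ?_, (List.take_append_drop _ u).symm⟩, ?_⟩
  · intro h
    have := congrArg List.length h
    simp [hn] at this
    omega
  · intro w' hw' hex
    obtain ⟨v', hv', hsplit⟩ := hex
    have hwlen : w'.length < n := by
      have hL := congrArg List.length hsplit
      rw [List.length_append] at hL
      have : 0 < v'.length := List.length_pos_iff.mpr hv'
      omega
    have hw0 : 0 < w'.length := List.length_pos_iff.mpr hw'.1
    have hdrop : u.drop (n - w'.length) = w' := by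
      rw [hsplit]
      have : n - w'.length = v'.length := by
        have := congrArg List.length hsplit; simp [hn] at this ⊢; omega
      rw [this, List.drop_left]
    have : w'.length ∈ S := by
      simp only [S, Finset.mem_filter, Finset.mem_range]
      exact ⟨by omega, hw0, hwlen, by rw [hdrop]; exact hw'⟩
    have := hkmax _ this
    simp only [id] at this
    have hlenk : (u.drop (n - k)).length = k := by simp [hn]; omega
    omega

/-- the left factor of the standard factorization is an ALSW -/
theorem left_factor_alsw {u u1 u2 : List X} (hu : IsALSW u)
    (h : LongestALSWProperSuffix u u2) (hsplit : u = u1 ++ u2) (h1 : u1 ≠ []) :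
    IsALSW u1 := by
  have h2ne : u2 ≠ [] := h.1.1
  apply isALSW_of_suffix_lt h1
  intro p' r' hu1 hp' hr'
  rcases lslt_trichotomy r' u1 with heq | hlt | hgt
  · exfalso
    subst heq
    have hll := congrArg List.length hu1
    rw [List.length_append] at hll
    exact hp' (List.eq_nil_of_length_eq_zero (by omega))
  · exact hlt
  · exfalso
    rcases lslt_cases hgt with ⟨w, hw, hext⟩ | hpos
    · -- u1 = r' ++ w
      have hsuff : LSLt (r' ++ u2) u := by
        have : u = p' ++ (r' ++ u2) := by rw [hsplit, hu1, List.append_assoc]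
        rw [this]
        exact alsw_suffix_lt (this ▸ hu) hp' (by simp [hr'])
      have hcanc : LSLt u2 (w ++ u2) := by
        have h' : LSLt (r' ++ u2) (r' ++ (w ++ u2)) := by
          have hueq : u = r' ++ (w ++ u2) := by rw [hsplit, hext, List.append_assoc]
          rw [← hueq]
          exact hsuff
        exact lslt_append_left_iff.mp h'
      have hT : LSLe (w ++ u2) u2 :=
        suffix_le_longest ⟨h.1, h.2.1, h.2.2⟩ (w ++ u2) r'
          (by rw [hsplit, hext, List.append_assoc]) hr' (by simp [hw])
      exact lslt_irrefl u2 (lslt_lsle_trans hcanc hT)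
    · have h1' : LSLt u (r' ++ u2) := by
        rw [hsplit]; exact hpos u2 u2
      have h2' : LSLt (r' ++ u2) u := by
        have : u = p' ++ (r' ++ u2) := by rw [hsplit, hu1, List.append_assoc]
        rw [this]
        exact alsw_suffix_lt (this ▸ hu) hp' (by simp [hr'])
      exact lslt_asymm h1' h2'

/-- key lemma: if `u2 ≤ v` then `v` is the longest ALSW proper suffix of `u ++ v`. -/
theorem longest_concat {u u2 v : List X} (h : LongestALSWProperSuffix u u2)
    (hv : IsALSW v) (hle : LSLe u2 v) (hu : u ≠ []) :
    LongestALSWProperSuffix (u ++ v) v := by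
  refine ⟨hv, ⟨u, hu, rfl⟩, ?_⟩
  intro w' hw' hex
  obtain ⟨v', hv', hsplit⟩ := hex
  by_contra hcon
  push_neg at hcon
  obtain ⟨e, hee, hue⟩ := append_eq_append_of_le (hsplit.symm : v' ++ w' = u ++ v) (le_of_lt hcon)
  have hene : e ≠ [] := by
    intro h'; subst h'; simp at hee; subst hee; omega
  have heu2 : LSLe e u2 := suffix_le_longest h e v' hue.symm hv' hene
  have hev : LSLe e v := lsle_trans heu2 hle
  have hvw : LSLt v w' := by
    rw [hee]
    exact alsw_suffix_lt (hee ▸ hw') hene hv.1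
  have hwe : LSLt w' e := by
    rw [hee]; exact lslt_append_right e hv.1
  exact lslt_irrefl v (lslt_lsle_trans (lslt_trans hvw hwe) hev)

theorem longest_single {x : X} {v : List X} (hv : IsALSW v) :
    LongestALSWProperSuffix ([x] ++ v) v := by
  refine ⟨hv, ⟨[x], by simp, rfl⟩, ?_⟩
  intro w' hw' hex
  obtain ⟨v', hv', hsplit⟩ := hex
  have h1 := congrArg List.length hsplit
  have h2 : 0 < v'.length := List.length_pos_iff.mpr hv'
  simp at h1
  omega

theorem longest_unique {u w w' : List X} (h : LongestALSWProperSuffix u w)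
    (h' : LongestALSWProperSuffix u w') : w = w' := by
  have h1 : w.length ≤ w'.length := h'.2.2 w h.1 h.2.1
  have h2 : w'.length ≤ w.length := h.2.2 w' h'.1 h'.2.1
  obtain ⟨v, hv, hu⟩ := h.2.1
  obtain ⟨v', hv', hu'⟩ := h'.2.1
  exact (List.append_inj (hu.symm.trans hu') (by
    have := congrArg List.length (hu.symm.trans hu'); simp at this; omega)).2

end LongestSuffix

section StdBracketing

variable {X : Type*} [LinearOrder X]

theorem wordOf_mul (a b : FreeMagma X) : wordOf (a * b) = wordOf a ++ wordOf b := rfl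

theorem std_word {w : List X} {t : FreeMagma X} (h : IsStdBracketing w t) : wordOf t = w := by
  induction h with
  | of x => rfl
  | mul halsw hlong h1 h2 ih1 ih2 => rw [wordOf_mul, ih1, ih2]

theorem std_alsw {w : List X} {t : FreeMagma X} (h : IsStdBracketing w t) : IsALSW w := by
  cases h with
  | of x => exact isALSW_singleton x
  | mul halsw _ _ _ => exact halsw

theorem std_exists {w : List X} (hw : IsALSW w) : ∃ t, IsStdBracketing w t := by
  suffices H : ∀ n w, w.length = n → IsALSW w → ∃ t, IsStdBracketing w t from
    H w.length w rfl hw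
  intro n
  induction n using Nat.strong_induction_on with
  | _ n ih =>
    intro w hlen hw
    rcases lt_or_ge w.length 2 with h2 | h2
    · have : w.length = 1 := by
        have := List.length_pos_iff.mpr hw.1; omega
      obtain ⟨x, rfl⟩ := List.length_eq_one_iff.mp this
      exact ⟨.of x, .of x⟩
    · obtain ⟨u2, hu2⟩ := longest_exists w h2
      obtain ⟨u1, hu1ne, hsplit⟩ := hu2.2.1
      have h2ne : u2 ≠ [] := hu2.1.1
      have halsw1 : IsALSW u1 := left_factor_alsw hw hu2 hsplit hu1ne
      have hl1 : u1.length < n := by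
        have := congrArg List.length hsplit
        have := List.length_pos_iff.mpr h2ne
        simp_all; omega
      have hl2 : u2.length < n := by
        have := congrArg List.length hsplit
        have := List.length_pos_iff.mpr hu1ne
        simp_all; omega
      obtain ⟨t1, ht1⟩ := ih u1.length hl1 u1 rfl halsw1
      obtain ⟨t2, ht2⟩ := ih u2.length hl2 u2 rfl hu2.1
      exact ⟨t1 * t2, hsplit ▸ IsStdBracketing.mul (hsplit ▸ hw) (hsplit ▸ hu2) ht1 ht2⟩

theorem std_inv {w : List X} {t : FreeMagma X} (h : IsStdBracketing w t) :
    (∃ x, w = [x] ∧ t = .of x) ∨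
    (∃ v w2 tv tw, w = v ++ w2 ∧ t = tv * tw ∧ LongestALSWProperSuffix w w2 ∧
      IsStdBracketing v tv ∧ IsStdBracketing w2 tw) := by
  cases h with
  | of x => exact Or.inl ⟨x, rfl, rfl⟩
  | mul halsw hlong h1 h2 =>
    exact Or.inr ⟨_, _, _, _, rfl, rfl, hlong, h1, h2⟩

theorem std_unique {w : List X} {t t' : FreeMagma X} (h : IsStdBracketing w t)
    (h' : IsStdBracketing w t') : t = t' := by
  suffices H : ∀ n w (t t' : FreeMagma X), w.length = n → IsStdBracketing w t →
      IsStdBracketing w t' → t = t' from H w.length w t t' rfl h h'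
  intro n
  induction n using Nat.strong_induction_on with
  | _ n ih =>
    intro w t t' hlen h h'
    rcases std_inv h with ⟨x, rfl, rfl⟩ | ⟨v, w2, tv, tw, hsp, rfl, hlong, h1, h2⟩
    · rcases std_inv h' with ⟨y, hxy, rfl⟩ | ⟨v, w2, tv, tw, hsp, rfl, hlong, h1, h2⟩
      · have : x = y := by injection hxy
        rw [this]
      · exfalso
        have hv := List.length_pos_iff.mpr (std_alsw h1).1
        have hw2 := List.length_pos_iff.mpr (std_alsw h2).1
        have := congrArg List.length hsp
        simp at this
        omega
    · rcases std_inv h' with ⟨y, hxy, rfl⟩ | ⟨v', w2', tv', tw', hsp', rfl, hlong', h1', h2'⟩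
      · exfalso
        have hv := List.length_pos_iff.mpr (std_alsw h1).1
        have hw2 := List.length_pos_iff.mpr (std_alsw h2).1
        rw [hxy] at hsp
        have := congrArg List.length hsp
        simp at this
        omega
      · have hw2eq : w2 = w2' := longest_unique hlong hlong'
        subst hw2eq
        have hveq : v = v' := by
          have : v ++ w2 = v' ++ w2 := hsp.symm.trans hsp'
          exact (List.append_inj this (by
            have := congrArg List.length this; simp at this; omega)).1
        subst hveq
        have hlv : v.length < n := by
          have := congrArg List.length hsp
          have := List.length_pos_iff.mpr (std_alsw h2).1
          simp_all; omega
        have hlw : w2.length < n := by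
          have := congrArg List.length hsp
          have := List.length_pos_iff.mpr (std_alsw h1).1
          simp_all; omega
        rw [ih v.length hlv v tv tv' rfl h1 h1', ih w2.length hlw w2 tw tw' rfl h2 h2']

end StdBracketing

section Coefficients

variable {k X : Type*} [Field k] [LinearOrder X]

theorem evalC_mul (a b : FreeMagma X) :
    (evalC (a * b) : FreeAssocAlg k X) = evalC a * evalC b - evalC b * evalC a := rfl

theorem coeffW_sub (f g : FreeAssocAlg k X) (u : List X) :
    coeffW (f - g) u = coeffW f u - coeffW g u :=
  Finsupp.sub_apply f.coeff g.coeff _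

theorem coeff_mul_exists {f g : FreeAssocAlg k X} {z : List X} (h : coeffW (f * g) z ≠ 0) :
    ∃ z1 z2, z = z1 ++ z2 ∧ coeffW f z1 ≠ 0 ∧ coeffW g z2 ≠ 0 := by
  classical
  rw [coeffW, MonoidAlgebra.mul_apply] at h
  rw [Finsupp.sum] at h
  obtain ⟨a, ha, hne⟩ := Finset.exists_ne_zero_of_sum_ne_zero h
  rw [Finsupp.sum] at hne
  obtain ⟨b, hb, hne2⟩ := Finset.exists_ne_zero_of_sum_ne_zero hne
  by_cases hab : a * b = FreeMonoid.ofList z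
  · refine ⟨FreeMonoid.toList a, FreeMonoid.toList b, ?_, ?_, ?_⟩
    · have h2 : FreeMonoid.toList a ++ FreeMonoid.toList b = z :=
        congrArg FreeMonoid.toList hab
      exact h2.symm
    · simpa [coeffW] using Finsupp.mem_support_iff.mp ha
    · simpa [coeffW] using Finsupp.mem_support_iff.mp hb
  · rw [if_neg hab] at hne2
    exact absurd rfl hne2

theorem coeff_mul_eq {f g : FreeAssocAlg k X} {p q : List X}
    (hf : ∀ z, coeffW f z ≠ 0 → z.length = p.length)
    (hg : ∀ z, coeffW g z ≠ 0 → z.length = q.length) :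
    coeffW (f * g) (p ++ q) = coeffW f p * coeffW g q := by
  classical
  rw [coeffW, MonoidAlgebra.mul_apply]
  rw [Finsupp.sum]
  rw [Finset.sum_eq_single (FreeMonoid.ofList p)]
  · rw [Finsupp.sum]
    rw [Finset.sum_eq_single (FreeMonoid.ofList q)]
    · rw [if_pos]
      · rfl
      · exact (FreeMonoid.ofList_append p q).symm
    · intro b hb hbq
      rw [if_neg]
      intro habs
      apply hbq
      have : FreeMonoid.ofList p * b = FreeMonoid.ofList p * FreeMonoid.ofList q := by
        rw [habs, FreeMonoid.ofList_append]
      exact mul_left_cancel this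
    · intro hq
      have : g.coeff (FreeMonoid.ofList q) = 0 := Finsupp.notMem_support_iff.mp hq
      simp [this, coeffW]
  · intro a ha hap
    apply Finset.sum_eq_zero
    intro b hb
    show (if a * b = FreeMonoid.ofList (p ++ q) then f.coeff a * g.coeff b else 0) = 0
    apply if_neg
    intro habs
    apply hap
    exfalso
    apply hap
    have hz : FreeMonoid.toList a ++ FreeMonoid.toList b = p ++ q :=
      congrArg FreeMonoid.toList habs
    have hla : (FreeMonoid.toList a).length = p.length := by
      apply hf
      simpa [coeffW] using Finsupp.mem_support_iff.mp ha
    have h3 := (List.append_inj hz hla).1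
    have h4 : a = FreeMonoid.ofList (FreeMonoid.toList a) := rfl
    rw [h4, h3]
  · intro hp
    have h0 : f.coeff (FreeMonoid.ofList p) = 0 := Finsupp.notMem_support_iff.mp hp
    rw [Finsupp.sum]
    apply Finset.sum_eq_zero
    intro b hb
    show (if FreeMonoid.ofList p * b = FreeMonoid.ofList (p ++ q) then
      f.coeff (FreeMonoid.ofList p) * g.coeff b else 0) = 0
    rw [h0, zero_mul]
    split <;> rfl

/-- triangular bound: leading coefficient 1 at `w`, all other support words are
permutations of `w` that are lexicographically smaller -/
def Bnd (f : FreeAssocAlg k X) (w : List X) : Prop :=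
  coeffW f w = 1 ∧ ∀ z, coeffW f z ≠ 0 → z = w ∨ (z.Perm w ∧ LSLt z w)

theorem Bnd.len {f : FreeAssocAlg k X} {w : List X} (h : Bnd f w) :
    ∀ z, coeffW f z ≠ 0 → z.length = w.length := by
  intro z hz
  rcases h.2 z hz with rfl | ⟨hperm, _⟩
  · rfl
  · exact hperm.length_eq

theorem bnd_mul_classify {f g : FreeAssocAlg k X} {p q : List X}
    (hf : Bnd f p) (hg : Bnd g q) :
    ∀ z, coeffW (f * g) z ≠ 0 → z = p ++ q ∨ (z.Perm (p ++ q) ∧ LSLt z (p ++ q)) := by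
  intro z hz
  obtain ⟨z1, z2, rfl, h1, h2⟩ := coeff_mul_exists hz
  rcases hf.2 z1 h1 with rfl | ⟨hp1, hl1⟩
  · rcases hg.2 z2 h2 with rfl | ⟨hp2, hl2⟩
    · exact Or.inl rfl
    · exact Or.inr ⟨List.Perm.append_left z1 hp2, lslt_append_left_iff.mpr hl2⟩
  · have hlen : z1.length = p.length := hp1.length_eq
    have hperm2 : z2.Perm q := by
      rcases hg.2 z2 h2 with rfl | ⟨hp2, _⟩
      · exact List.Perm.refl _
      · exact hp2
    exact Or.inr ⟨List.Perm.append hp1 hperm2,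
      lslt_append_of_length_le hl1 (le_of_eq hlen) z2 q⟩

theorem bnd_mul_coeff {f g : FreeAssocAlg k X} {p q : List X}
    (hf : Bnd f p) (hg : Bnd g q) : coeffW (f * g) (p ++ q) = 1 := by
  rw [coeff_mul_eq hf.len hg.len, hf.1, hg.1, one_mul]

theorem std_triangular {w : List X} {t : FreeMagma X} (h : IsStdBracketing w t) :
    Bnd (evalC t : FreeAssocAlg k X) w := by
  induction h with
  | of x =>
    constructor
    · show (MonoidAlgebra.single (FreeMonoid.ofList [x]) (1:k)).coeff (FreeMonoid.ofList [x]) = 1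
      simp [MonoidAlgebra.single_apply]
    · intro z hz
      left
      by_contra hne
      apply hz
      show (MonoidAlgebra.single (FreeMonoid.ofList [x]) (1:k)).coeff (FreeMonoid.ofList z) = 0
      classical
      rw [MonoidAlgebra.single_apply]
      apply if_neg
      intro habs
      have h2 : [x] = z := congrArg FreeMonoid.toList habs
      exact hne h2.symm
  | mul halsw hlong h1 h2 ih1 ih2 =>
    rename_i v w2 tv tw
    have hvne : v ≠ [] := (std_alsw h1).1
    have hw2ne : w2 ≠ [] := (std_alsw h2).1
    have hrot : LSLt (w2 ++ v) (v ++ w2) := halsw.2 v w2 hvne hw2ne rfl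
    rw [evalC_mul]
    have hrev : ∀ z, coeffW ((evalC tw * evalC tv : FreeAssocAlg k X)) z ≠ 0 →
        z.Perm (v ++ w2) ∧ LSLt z (v ++ w2) := by
      intro z hz
      rcases bnd_mul_classify ih2 ih1 z hz with rfl | ⟨hperm, hlt⟩
      · exact ⟨List.perm_append_comm, hrot⟩
      · exact ⟨hperm.trans List.perm_append_comm, lslt_trans hlt hrot⟩
    constructor
    · rw [coeffW_sub, bnd_mul_coeff ih1 ih2]
      have : coeffW ((evalC tw * evalC tv : FreeAssocAlg k X)) (v ++ w2) = 0 := by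
        by_contra hne
        exact lslt_irrefl _ (hrev _ hne).2
      rw [this, sub_zero]
    · intro z hz
      rw [coeffW_sub] at hz
      by_cases h12 : coeffW ((evalC tv * evalC tw : FreeAssocAlg k X)) z ≠ 0
      · exact bnd_mul_classify ih1 ih2 z h12
      · push_neg at h12
        rw [h12, zero_sub, neg_ne_zero] at hz
        exact Or.inr (hrev z hz)

end Coefficients

section SpanMachinery

variable (k : Type*) {X : Type*} [Field k] [LinearOrder X]

/-- monomials given by standard bracketings of ALSWs that are permutations of `c`
and are `≤ c` in the Shirshov order -/
def SpanSet (c : List X) : Set (FreeAssocAlg k X) :=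
  {g | ∃ w t, IsStdBracketing w t ∧ w.Perm c ∧ LSLe w c ∧ g = evalC t}

variable {k}

theorem spanSet_mono {c c' : List X} (hperm : c'.Perm c) (hle : LSLe c' c) :
    SpanSet k c' ⊆ SpanSet (X := X) k c := by
  rintro g ⟨w, t, hstd, hwperm, hwle, rfl⟩
  exact ⟨w, t, hstd, hwperm.trans hperm, lsle_trans hwle hle, rfl⟩

/-- number of permutations of `c` which are smaller than `c` -/
noncomputable def permLtCard (c : List X) : ℕ :=
  Set.ncard {z : List X | z.Perm c ∧ LSLt z c}

theorem permLt_finite (c : List X) : Set.Finite {z : List X | z.Perm c ∧ LSLt z c} := by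
  apply Set.Finite.subset (List.finite_toSet c.permutations)
  intro z hz
  simpa [List.mem_permutations] using hz.1

theorem permLtCard_lt {c c' : List X} (hperm : c'.Perm c) (hlt : LSLt c' c) :
    permLtCard c' < permLtCard c := by
  apply Set.ncard_lt_ncard _ (permLt_finite c)
  constructor
  · intro z hz
    exact ⟨hz.1.trans hperm, lslt_trans hz.2 hlt⟩
  · intro hsub
    have : c' ∈ {z : List X | z.Perm c' ∧ LSLt z c'} := hsub ⟨hperm, hlt⟩
    exact lslt_irrefl c' this.2

theorem lie_mem_span_left {A : Type*} [Ring A] [Algebra k A] {x : A} {S T : Set A}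
    (h : ∀ g ∈ S, ⁅x, g⁆ ∈ Submodule.span k T) :
    ∀ y ∈ Submodule.span k S, ⁅x, y⁆ ∈ Submodule.span k T := by
  intro y hy
  induction hy using Submodule.span_induction with
  | mem g hg => exact h g hg
  | zero => rw [lie_zero]; exact zero_mem _
  | add y z _ _ hy hz => rw [lie_add]; exact add_mem hy hz
  | smul c y _ hy => rw [lie_smul]; exact Submodule.smul_mem _ _ hy

end SpanMachinery

section ClaimC

variable {k X : Type*} [Field k] [LinearOrder X]

theorem claimC : ∀ (n ν m : ℕ) (a b : List X) (ta tb : FreeMagma X),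
    IsStdBracketing a ta → IsStdBracketing b tb → LSLt b a →
    a.length + b.length = n → permLtCard (a ++ b) = ν → a.length = m →
    ⁅(evalC ta : FreeAssocAlg k X), evalC tb⁆ ∈ Submodule.span k (SpanSet k (a ++ b)) := by
  intro n
  induction n using Nat.strong_induction_on with
  | _ n IHn =>
  intro ν
  induction ν using Nat.strong_induction_on with
  | _ ν IHν =>
  intro m
  induction m using Nat.strong_induction_on with
  | _ m IHm =>
  intro a b ta tb ha hb hba hn hν hm
  have hbr : ⁅(evalC ta : FreeAssocAlg k X), evalC tb⁆ = (evalC (ta * tb) : FreeAssocAlg k X) := by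
    rw [Ring.lie_def, evalC_mul]
  have hb_alsw : IsALSW b := std_alsw hb
  have ha_alsw : IsALSW a := std_alsw ha
  rcases std_inv ha with ⟨x, hax, hta⟩ | ⟨u1, u2, t1, t2, hsp, hta, hlong, h1, h2⟩
  · -- a is a single letter: [x] ++ b is already a standard bracketing
    subst hax; subst hta
    rw [hbr]
    apply Submodule.subset_span
    refine ⟨[x] ++ b, .of x * tb, ?_, List.Perm.refl _, lsle_refl _, by rfl⟩
    exact IsStdBracketing.mul (alsw_append (isALSW_singleton x) hb_alsw hba)
      (longest_single hb_alsw) (IsStdBracketing.of x) hb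
  · subst hsp; subst hta
    have h1_alsw : IsALSW u1 := std_alsw h1
    have h2_alsw : IsALSW u2 := std_alsw h2
    have hu1ne : u1 ≠ [] := h1_alsw.1
    have hu2ne : u2 ≠ [] := h2_alsw.1
    have hbne : b ≠ [] := hb_alsw.1
    rcases lslt_trichotomy u2 b with heq | hlt | hgt
    · -- u2 = b : good case
      rw [hbr]
      apply Submodule.subset_span
      refine ⟨(u1 ++ u2) ++ b, (t1 * t2) * tb, ?_, List.Perm.refl _, lsle_refl _, by rfl⟩
      exact IsStdBracketing.mul (alsw_append ha_alsw hb_alsw hba)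
        (longest_concat hlong hb_alsw (Or.inl heq) (by simp [hu1ne]))
        (IsStdBracketing.mul ha_alsw hlong h1 h2) hb
    · -- u2 < b : good case
      rw [hbr]
      apply Submodule.subset_span
      refine ⟨(u1 ++ u2) ++ b, (t1 * t2) * tb, ?_, List.Perm.refl _, lsle_refl _, by rfl⟩
      exact IsStdBracketing.mul (alsw_append ha_alsw hb_alsw hba)
        (longest_concat hlong hb_alsw (Or.inr hlt) (by simp [hu1ne]))
        (IsStdBracketing.mul ha_alsw hlong h1 h2) hb
    · -- b < u2 : recursive case
      set e1 := (evalC t1 : FreeAssocAlg k X) with he1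
      set e2 := (evalC t2 : FreeAssocAlg k X) with he2
      set e3 := (evalC tb : FreeAssocAlg k X) with he3
      have h12 : (evalC (t1 * t2) : FreeAssocAlg k X) = ⁅e1, e2⁆ := by
        rw [evalC_mul, Ring.lie_def]
      -- basic order facts
      have hu2a : LSLt u2 (u1 ++ u2) := alsw_suffix_lt ha_alsw hu1ne hu2ne
      have hau1 : LSLt (u1 ++ u2) u1 := lslt_append_right u1 hu2ne
      have hu2u1 : LSLt u2 u1 := lslt_trans hu2a hau1
      have hbu1 : LSLt b u1 := lslt_trans hba hau1
      -- `u2 ++ anything < u1` and `u2 ++ w' < (u1 ++ u2) ++ b`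
      have hu2b_lt_u1 : LSLt (u2 ++ b) u1 := lslt_append_self hu2u1 b
      -- key bound for the (u2, w') pairs
      have hu2x_lt : ∀ x' : List X, LSLt (u2 ++ x') (u1 ++ (u2 ++ b)) := by
        intro x'
        rcases lslt_cases hu2u1 with ⟨t, htne, hext⟩ | hpos
        · -- u2 = u1 ++ t
          have htsuff : LSLe t u2 :=
            suffix_le_longest hlong t (u1 ++ u1)
              (by rw [hext, List.append_assoc]) (by simp [hu1ne]) htne
          have htlen : t.length < u2.length := by
            have hL := congrArg List.length hext
            rw [List.length_append] at hL
            have hp := List.length_pos_iff.mpr hu1ne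
            omega
          have htlt : LSLt t u2 := by
            rcases htsuff with rfl | h'
            · omega
            · exact h'
          rcases lslt_cases htlt with ⟨s, hsne, hsext⟩ | hpos2
          · exfalso
            have := congrArg List.length hsext
            simp at this
            omega
          · have hgoal := hpos2 x' b
            rw [hext] at hgoal
            rw [hext, List.append_assoc]
            exact lslt_append_left_iff.mpr hgoal
        · exact hpos x' (u2 ++ b)
      rw [hbr, evalC_mul, show (evalC (t1 * t2) : FreeAssocAlg k X) * e3 -
        e3 * evalC (t1 * t2) = ⁅(evalC (t1 * t2) : FreeAssocAlg k X), e3⁆ from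
        (Ring.lie_def _ _).symm, h12, lie_lie]
      apply sub_mem
      · -- Term A : ⁅e1, ⁅e2, e3⁆⁆
        have hinner : ⁅e2, e3⁆ ∈ Submodule.span k (SpanSet k (u2 ++ b)) := by
          apply IHn (u2.length + b.length) (by
            have := List.length_pos_iff.mpr hu1ne
            simp only [List.length_append] at hn
            omega) (permLtCard (u2 ++ b)) u2.length u2 b t2 tb h2 hb hgt rfl rfl rfl
        apply lie_mem_span_left _ _ hinner
        rintro g ⟨w, tw, hstdw, hwperm, hwle, rfl⟩
        have hw_lt_u1 : LSLt w u1 := lsle_lslt_trans hwle hu2b_lt_u1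
        rcases hwle with hweq | hwlt
        · -- w = u2 ++ b : same ν, smaller first factor
          have hccat : u1 ++ w = (u1 ++ u2) ++ b := by rw [hweq, List.append_assoc]
          have hres := IHm u1.length (by
              have := List.length_pos_iff.mpr hu2ne
              simp only [List.length_append] at hm
              omega) u1 w t1 tw h1 hstdw hw_lt_u1
            (by
              have hL := hwperm.length_eq
              simp only [List.length_append] at hL hn ⊢
              omega)
            (by rw [hccat]; exact hν)
            rfl
          rw [hccat] at hres
          exact hres
        · -- w < u2 ++ b : smaller ν
          have hccat_perm : (u1 ++ w).Perm ((u1 ++ u2) ++ b) := by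
            rw [List.append_assoc]
            exact List.Perm.append_left u1 hwperm
          have hccat_lt : LSLt (u1 ++ w) ((u1 ++ u2) ++ b) := by
            rw [List.append_assoc]
            exact lslt_append_left_iff.mpr hwlt
          have := IHν (permLtCard (u1 ++ w)) (by
              rw [← hν]; exact permLtCard_lt hccat_perm hccat_lt)
            u1.length u1 w t1 tw h1 hstdw hw_lt_u1
            (by
              have hL := hwperm.length_eq
              simp only [List.length_append] at hL hn ⊢
              omega) rfl rfl
          exact Submodule.span_mono (spanSet_mono hccat_perm (Or.inr hccat_lt)) this
      · -- Term B : ⁅e2, ⁅e1, e3⁆⁆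
        have hinner : ⁅e1, e3⁆ ∈ Submodule.span k (SpanSet k (u1 ++ b)) := by
          apply IHn (u1.length + b.length) (by
            have := List.length_pos_iff.mpr hu2ne
            simp only [List.length_append] at hn
            omega) (permLtCard (u1 ++ b)) u1.length u1 b t1 tb h1 hb hbu1 rfl rfl rfl
        apply lie_mem_span_left _ _ hinner
        rintro g ⟨w', tw', hstdw', hwperm', hwle', rfl⟩
        rcases lslt_trichotomy w' u2 with hweq | hwlt2 | hwgt2
        · -- w' = u2 : the bracket vanishes
          subst hweq
          have : tw' = t2 := std_unique hstdw' h2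
          rw [this, ← he2, lie_self]
          exact zero_mem _
        · -- w' < u2 : pair (u2, w'), strictly smaller ν
          have hccat_perm : (u2 ++ w').Perm ((u1 ++ u2) ++ b) := by
            calc u2 ++ w' ~ u2 ++ (u1 ++ b) := List.Perm.append_left u2 hwperm'
            _ = (u2 ++ u1) ++ b := by rw [List.append_assoc]
            _ ~ (u1 ++ u2) ++ b := List.Perm.append_right b List.perm_append_comm
          have hccat_lt : LSLt (u2 ++ w') ((u1 ++ u2) ++ b) := by
            rw [List.append_assoc]
            exact hu2x_lt w'
          have := IHν (permLtCard (u2 ++ w')) (by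
              rw [← hν]; exact permLtCard_lt hccat_perm hccat_lt)
            u2.length u2 w' t2 tw' h2 hstdw' hwlt2
            (by
              have hL := hwperm'.length_eq
              simp only [List.length_append] at hL hn ⊢
              omega) rfl rfl
          exact Submodule.span_mono (spanSet_mono hccat_perm (Or.inr hccat_lt)) this
        · -- u2 < w' : flip the bracket, pair (w', u2), strictly smaller ν
          have hccat_perm : (w' ++ u2).Perm ((u1 ++ u2) ++ b) := by
            calc w' ++ u2 ~ (u1 ++ b) ++ u2 := List.Perm.append_right u2 hwperm'
            _ ~ u2 ++ (u1 ++ b) := List.perm_append_comm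
            _ = (u2 ++ u1) ++ b := by rw [List.append_assoc]
            _ ~ (u1 ++ u2) ++ b := List.Perm.append_right b List.perm_append_comm
          have hrot : LSLt (b ++ u2) (u2 ++ b) :=
            (alsw_append h2_alsw hb_alsw hgt).2 u2 b hu2ne hbne rfl
          have hub_lt : LSLt ((u1 ++ b) ++ u2) ((u1 ++ u2) ++ b) := by
            rw [List.append_assoc, List.append_assoc]
            exact lslt_append_left_iff.mpr hrot
          have hccat_lt : LSLt (w' ++ u2) ((u1 ++ u2) ++ b) := by
            rcases hwle' with hweq' | hwlt'
            · rw [hweq']; exact hub_lt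
            · have hlen : w'.length = (u1 ++ b).length := hwperm'.length_eq
              exact lslt_trans
                (lslt_append_of_length_le hwlt' (le_of_eq hlen) u2 u2) hub_lt
          have hmem := IHν (permLtCard (w' ++ u2)) (by
              rw [← hν]; exact permLtCard_lt hccat_perm hccat_lt)
            w'.length w' u2 tw' t2 hstdw' h2 hwgt2
            (by
              have hL := hwperm'.length_eq
              simp only [List.length_append] at hL hn ⊢
              omega) rfl rfl
          have hneg : ⁅e2, (evalC tw' : FreeAssocAlg k X)⁆ =
              -⁅(evalC tw' : FreeAssocAlg k X), e2⁆ := (lie_skew _ _).symm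
          rw [hneg]
          exact neg_mem (Submodule.span_mono (spanSet_mono hccat_perm (Or.inr hccat_lt)) hmem)

end ClaimC

section Spanning

variable {k X : Type*} [Field k] [LinearOrder X]

/-- the set of all standard LS monomials -/
def StdMonomials (k : Type*) [Field k] (X : Type*) [LinearOrder X] : Set (FreeAssocAlg k X) :=
  {g | ∃ w t, IsStdBracketing w t ∧ g = evalC t}

/-- standard LS monomials whose word is a permutation of `c` -/
def SpanSetAll (k : Type*) [Field k] {X : Type*} [LinearOrder X] (c : List X) :
    Set (FreeAssocAlg k X) :=
  {g | ∃ w t, IsStdBracketing w t ∧ w.Perm c ∧ g = evalC t}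

theorem lie_mem_span_right {A : Type*} [Ring A] [Algebra k A] {x : A} {S T : Set A}
    (h : ∀ g ∈ S, ⁅g, x⁆ ∈ Submodule.span k T) :
    ∀ y ∈ Submodule.span k S, ⁅y, x⁆ ∈ Submodule.span k T := by
  intro y hy
  induction hy using Submodule.span_induction with
  | mem g hg => exact h g hg
  | zero => rw [zero_lie]; exact zero_mem _
  | add y z _ _ hy hz => rw [add_lie]; exact add_mem hy hz
  | smul c y _ hy => rw [smul_lie]; exact Submodule.smul_mem _ _ hy

theorem spanAll (t : FreeMagma X) :
    (evalC t : FreeAssocAlg k X) ∈ Submodule.span k (SpanSetAll k (wordOf t)) := by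
  induction t with
  | ih1 x =>
    apply Submodule.subset_span
    exact ⟨[x], .of x, IsStdBracketing.of x, List.Perm.refl _, rfl⟩
  | ih2 t1 t2 ih1 ih2 =>
    have h12 : (evalC (t1 * t2) : FreeAssocAlg k X) = ⁅(evalC t1 : FreeAssocAlg k X), (evalC t2 : FreeAssocAlg k X)⁆ := by
      rw [evalC_mul, Ring.lie_def]

    rw [h12]
    apply lie_mem_span_right _ _ ih1
    intro g hg
    apply lie_mem_span_left _ _ ih2
    intro g' hg'
    obtain ⟨w, tw, hstd, hperm, rfl⟩ := hg
    obtain ⟨w', tw', hstd', hperm', rfl⟩ := hg'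
    have hsub : ∀ c : List X, c.Perm (w ++ w') →
        SpanSet k c ⊆ SpanSetAll (X := X) k (wordOf (t1 * t2)) := by
      rintro c hc g ⟨z, tz, hz, hzperm, _, rfl⟩
      exact ⟨z, tz, hz, (hzperm.trans hc).trans
        ((hperm.append hperm').trans (by rw [wordOf_mul])), rfl⟩
    rcases lslt_trichotomy w' w with heq | hlt | hgt
    · have : tw' = tw := by
        subst heq; exact std_unique hstd' hstd
      rw [this, lie_self]
      exact zero_mem _
    · have := claimC (k := k) (w.length + w'.length) (permLtCard (w ++ w')) w.length
        w w' tw tw' hstd hstd' hlt rfl rfl rfl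
      exact Submodule.span_mono (hsub _ (List.Perm.refl _)) this
    · have := claimC (k := k) (w'.length + w.length) (permLtCard (w' ++ w)) w'.length
        w' w tw' tw hstd' hstd hgt rfl rfl rfl
      have hmem := Submodule.span_mono (hsub _ List.perm_append_comm) this
      rw [show ⁅(evalC tw : FreeAssocAlg k X), evalC tw'⁆ =
        -⁅(evalC tw' : FreeAssocAlg k X), evalC tw⁆ from (lie_skew _ _).symm]
      exact neg_mem hmem

theorem lie_mem_span_stdMonomials {f : FreeAssocAlg k X} (hf : f ∈ LieX k X) :
    f ∈ Submodule.span k (StdMonomials k X) := by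
  -- first: f is in the span of all `evalC t`
  let K : LieSubalgebra k (FreeAssocAlg k X) :=
    { Submodule.span k (Set.range (evalC (k := k) (X := X))) with
      lie_mem' := by
        intro x y hx hy
        apply lie_mem_span_right _ _ hx
        intro g hg
        apply lie_mem_span_left _ _ hy
        intro g' hg'
        obtain ⟨s, rfl⟩ := hg
        obtain ⟨s', rfl⟩ := hg'
        apply Submodule.subset_span
        exact ⟨s * s', by rw [evalC_mul, Ring.lie_def]⟩ }
  have hK : f ∈ K := by
    apply LieSubalgebra.lieSpan_le.mpr _ hf
    rintro g ⟨x, rfl⟩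
    show gen k x ∈ Submodule.span k (Set.range (evalC (k := k) (X := X)))
    exact Submodule.subset_span ⟨.of x, rfl⟩
  have hf' : f ∈ Submodule.span k (Set.range (evalC (k := k) (X := X))) := hK
  -- now rewrite each evalC t through spanAll
  have hsub : Set.range (evalC (k := k) (X := X)) ⊆
      Submodule.span k (StdMonomials k X) := by
    rintro g ⟨t, rfl⟩
    have hmono : Submodule.span k (SpanSetAll k (wordOf t)) ≤
        Submodule.span k (StdMonomials k X) := by
      apply Submodule.span_mono
      rintro g' ⟨w, tw, hstd, _, rfl⟩
      exact ⟨w, tw, hstd, rfl⟩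
    exact hmono (spanAll t)
  exact Submodule.span_le.mpr hsub hf'

end Spanning

section DegLex

variable {X : Type*} [LinearOrder X]

theorem deglt_trans {u v w : List X} (h1 : DegLt u v) (h2 : DegLt v w) : DegLt u w := by
  rcases h1 with h1 | ⟨he1, hl1⟩ <;> rcases h2 with h2 | ⟨he2, hl2⟩
  · exact Or.inl (h1.trans h2)
  · exact Or.inl (he2 ▸ h1)
  · exact Or.inl (he1 ▸ h2)
  · exact Or.inr ⟨he1.trans he2, lslt_trans hl1 hl2⟩

theorem deglt_irrefl (u : List X) : ¬ DegLt u u := by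
  rintro (h | ⟨_, h⟩)
  · omega
  · exact lslt_irrefl u h

theorem deglt_asymm {u v : List X} (h1 : DegLt u v) (h2 : DegLt v u) : False :=
  deglt_irrefl u (deglt_trans h1 h2)

theorem deg_trichotomy (u v : List X) : u = v ∨ DegLt u v ∨ DegLt v u := by
  rcases lt_trichotomy u.length v.length with h | h | h
  · exact Or.inr (Or.inl (Or.inl h))
  · rcases lslt_trichotomy u v with he | hl | hg
    · exact Or.inl he
    · exact Or.inr (Or.inl (Or.inr ⟨h, hl⟩))
    · exact Or.inr (Or.inr (Or.inr ⟨h.symm, hg⟩))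
  · exact Or.inr (Or.inr (Or.inl h))

theorem degle_of_deglemax {z w w' : List X} (h1 : DegLe z w) (h2 : w = w' ∨ DegLt w w') :
    DegLe z w' := by
  rcases h2 with rfl | h2
  · exact h1
  · rcases h1 with rfl | h1
    · exact Or.inr h2
    · exact Or.inr (deglt_trans h1 h2)

theorem exists_max_word {α : Type*} (s : Finset α) (hs : s.Nonempty) (W : α → List X) :
    ∃ a ∈ s, ∀ b ∈ s, W b = W a ∨ DegLt (W b) (W a) := by
  classical
  induction s using Finset.induction_on with
  | empty => exact absurd hs (by simp)
  | @insert a s ha ih =>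
    rcases Finset.eq_empty_or_nonempty s with rfl | hne
    · refine ⟨a, by simp, ?_⟩
      intro b hb
      simp at hb
      subst hb
      exact Or.inl rfl
    · obtain ⟨m, hm, hmax⟩ := ih hne
      rcases deg_trichotomy (W a) (W m) with he | hl | hg
      · refine ⟨m, by simp [hm], ?_⟩
        intro b hb
        rcases Finset.mem_insert.mp hb with rfl | hb
        · exact Or.inl he
        · exact hmax b hb
      · refine ⟨m, by simp [hm], ?_⟩
        intro b hb
        rcases Finset.mem_insert.mp hb with rfl | hb
        · exact Or.inr hl
        · exact hmax b hb
      · refine ⟨a, by simp, ?_⟩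
        intro b hb
        rcases Finset.mem_insert.mp hb with rfl | hb
        · exact Or.inl rfl
        · rcases hmax b hb with he | hl
          · exact Or.inr (he ▸ hg)
          · exact Or.inr (deglt_trans hl hg)

end DegLex

section FinalCoeff

variable {k X : Type*} [Field k] [LinearOrder X]

theorem coeffW_finsetSum {α : Type*} (s : Finset α) (F : α → FreeAssocAlg k X) (u : List X) :
    coeffW (∑ g ∈ s, F g) u = ∑ g ∈ s, coeffW (F g) u := by
  simp only [coeffW]
  rw [MonoidAlgebra.coeff_sum]
  exact Finsupp.finset_sum_apply _ _ _

theorem coeffW_smul (r : k) (g : FreeAssocAlg k X) (u : List X) :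
    coeffW (r • g) u = r * coeffW g u := by
  simp only [coeffW]
  rw [MonoidAlgebra.coeff_smul, Finsupp.smul_apply, smul_eq_mul]

theorem bnd_degle {g : FreeAssocAlg k X} {w z : List X} (h : Bnd g w)
    (hz : coeffW g z ≠ 0) : DegLe z w := by
  rcases h.2 z hz with rfl | ⟨hperm, hlt⟩
  · exact Or.inl rfl
  · exact Or.inr (Or.inr ⟨hperm.length_eq, hlt⟩)

end FinalCoeff

/-- For any nonzero Lie element `f ∈ Lie(X) ⊆ k⟨X⟩`, the
leading word of `f` in the deg-lex order is an ALSW. -/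
theorem leading_word_of_lie_element_is_alsw {k X : Type*} [Field k] [LinearOrder X]
    (f : FreeAssocAlg k X) (hf : f ∈ LieX k X) (hf0 : f ≠ 0)
    (u : List X) (hu : IsLeadingWord f u) :
    IsALSW u := by
  classical
  have hf' := lie_mem_span_stdMonomials hf
  rw [Submodule.mem_span_set] at hf'
  obtain ⟨c, hcsupp, hcsum⟩ := hf'
  -- choice of a word for each monomial
  let W : FreeAssocAlg k X → List X := fun g =>
    if h : ∃ w t, IsStdBracketing w t ∧ g = evalC t then h.choose else []
  have hWspec : ∀ g, (h : ∃ w t, IsStdBracketing w t ∧ g = evalC t) →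
      ∃ t, IsStdBracketing (W g) t ∧ g = evalC t := by
    intro g h
    simp only [W]
    rw [dif_pos h]
    exact h.choose_spec
  have hmem : ∀ g ∈ c.support, ∃ t, IsStdBracketing (W g) t ∧ g = evalC t :=
    fun g hg => hWspec g (hcsupp hg)
  have hBnd : ∀ g ∈ c.support, Bnd g (W g) := by
    intro g hg
    obtain ⟨t, hstd, rfl⟩ := hmem g hg
    exact std_triangular hstd
  have hinj : ∀ g ∈ c.support, ∀ g' ∈ c.support, W g = W g' → g = g' := by
    intro g hg g' hg' hW
    obtain ⟨t, hstd, rfl⟩ := hmem g hg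
    obtain ⟨t', hstd', rfl⟩ := hmem g' hg'
    rw [std_unique hstd (hW ▸ hstd')]
  -- support is nonempty
  have hne : c.support.Nonempty := by
    rcases Finset.eq_empty_or_nonempty c.support with he | hne
    · exfalso
      apply hf0
      rw [← hcsum, Finsupp.sum, he, Finset.sum_empty]
    · exact hne
  obtain ⟨gm, hgm, hmax⟩ := exists_max_word c.support hne W
  -- the coefficient of f at any word
  have hcoeff : ∀ z, coeffW f z = ∑ g ∈ c.support, c g * coeffW g z := by
    intro z
    rw [← hcsum, Finsupp.sum, coeffW_finsetSum]
    apply Finset.sum_congr rfl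
    intro g hg
    exact coeffW_smul _ _ _
  -- the coefficient at the maximal word is the coefficient of gm
  have htop : coeffW f (W gm) = c gm := by
    rw [hcoeff, Finset.sum_eq_single gm]
    · rw [(hBnd gm hgm).1, mul_one]
    · intro g hg hne'
      have hz : coeffW g (W gm) = 0 := by
        by_contra habs
        rcases (hBnd g hg).2 _ habs with he | ⟨hperm, hlt⟩
        · exact hne' (hinj g hg gm hgm he.symm)
        · rcases hmax g hg with he2 | hl2
          · exact hne' (hinj g hg gm hgm he2)
          · rcases hl2 with h' | ⟨_, h'⟩
            · have := hperm.length_eq; omega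
            · exact lslt_asymm hlt h'
      rw [hz, mul_zero]
    · intro habs
      exact absurd hgm habs
  have htopne : coeffW f (W gm) ≠ 0 := by
    rw [htop]
    exact Finsupp.mem_support_iff.mp hgm
  -- every word in the support of f is ≤ W gm
  have hbound : ∀ z, coeffW f z ≠ 0 → DegLe z (W gm) := by
    intro z hz
    rw [hcoeff] at hz
    obtain ⟨g, hg, hgne⟩ := Finset.exists_ne_zero_of_sum_ne_zero hz
    have : coeffW g z ≠ 0 := fun h0 => hgne (by rw [h0, mul_zero])
    exact degle_of_deglemax (bnd_degle (hBnd g hg) this) (hmax g hg)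
  -- conclude u = W gm
  have halsw : IsALSW (W gm) := by
    obtain ⟨t, hstd, _⟩ := hmem gm hgm
    exact std_alsw hstd
  rcases hu.2 (W gm) htopne with he | hl
  · rw [← he]; exact halsw
  · exfalso
    rcases hbound u hu.1 with he2 | hl2
    · exact deglt_irrefl u (he2 ▸ hl)
    · exact deglt_asymm hl hl2
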